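/- Let n ≥ 1 and let λ be a Schwartz function on ℝ⁴. Then the function G_λ : (ℝ⁴)^n → ℂ defined by G_λ(a₁,…,a_n) = λ(κ(a)) · exp( −(1/2) Σ_{j=1}^n |a_j − κ(a)|_E² ), where κ(a) = (1/n) Σ_{j=1}^n a_j ∈ ℝ⁴, is a Schwartz function on ℝ^{4n}. -/

import Mathlib

open scoped BigOperators NNReal

noncomputable section GCKaux

open SchwartzMap Finset
open scoped ContDiff

namespace GCK

/-- Elementary bound: `|x|^m * exp(-(x^2/2)) ≤ 1 + 2^m * m!`. -/
lemma pow_mul_exp_le (m : ℕ) (x : ℝ) :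
    |x| ^ m * Real.exp (-(x ^ 2 / 2)) ≤ 1 + 2 ^ m * m.factorial := by
  have hE : Real.exp (-(x ^ 2 / 2)) ≤ 1 := by
    rw [Real.exp_le_one_iff]
    have := sq_nonneg x
    nlinarith
  have hEpos : (0 : ℝ) < Real.exp (-(x ^ 2 / 2)) := Real.exp_pos _
  rcases le_total (|x|) 1 with h | h
  · have h1 : |x| ^ m ≤ 1 := pow_le_one₀ (abs_nonneg x) h
    have : |x| ^ m * Real.exp (-(x ^ 2 / 2)) ≤ 1 * 1 :=
      mul_le_mul h1 hE hEpos.le zero_le_one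
    have h2 : (0:ℝ) ≤ 2 ^ m * m.factorial := by positivity
    linarith
  · -- `t^m ≤ m! * exp t` for `t = x^2/2 ≥ 0`
    set t : ℝ := x ^ 2 / 2 with ht
    have htnn : 0 ≤ t := by positivity
    have hsum : t ^ m / m.factorial ≤ Real.exp t := by
      have := Real.sum_le_exp_of_nonneg htnn (m + 1)
      refine le_trans ?_ this
      refine Finset.single_le_sum (f := fun i => t ^ i / i.factorial) ?_ ?_
      · intro i _; positivity
      · exact Finset.self_mem_range_succ m
    have hpow : |x| ^ m ≤ (x ^ 2) ^ m := by
      calc |x| ^ m ≤ (|x| ^ 2) ^ m := by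
            apply pow_le_pow_left₀ (abs_nonneg x) ?_ m
            nlinarith [abs_nonneg x]
          _ = (x ^ 2) ^ m := by rw [sq_abs]
    have hx2 : (x ^ 2) ^ m = 2 ^ m * t ^ m := by
      rw [ht, div_pow]
      field_simp
    have hmain : (x ^ 2) ^ m * Real.exp (-t) ≤ 2 ^ m * m.factorial := by
      rw [hx2, Real.exp_neg]
      have h1 : t ^ m ≤ m.factorial * Real.exp t := by
        rw [div_le_iff₀ (by positivity : (0:ℝ) < (m.factorial : ℝ))] at hsum
        linarith [hsum]
      calc 2 ^ m * t ^ m * (Real.exp t)⁻¹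
          ≤ 2 ^ m * (m.factorial * Real.exp t) * (Real.exp t)⁻¹ := by
            apply mul_le_mul_of_nonneg_right ?_ (by positivity)
            apply mul_le_mul_of_nonneg_left h1 (by positivity)
        _ = 2 ^ m * m.factorial := by
            field_simp
    have : |x| ^ m * Real.exp (-t) ≤ (x ^ 2) ^ m * Real.exp (-t) :=
      mul_le_mul_of_nonneg_right hpow (Real.exp_pos _).le
    nlinarith [this, hmain]

/-- Polynomial times Gaussian is bounded, with extra power weight. -/
lemma poly_gauss_bound (p : Polynomial ℝ) (k : ℕ) :
    ∃ C : ℝ, ∀ x : ℝ, |x| ^ k * (|p.eval x| * Real.exp (-(x ^ 2 / 2))) ≤ C := by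
  classical
  set d := p.natDegree
  refine ⟨∑ i ∈ Finset.range (d + 1),
      |p.coeff i| * (1 + 2 ^ (k + i) * (k + i).factorial), fun x => ?_⟩
  have heval : |p.eval x| ≤ ∑ i ∈ Finset.range (d + 1), |p.coeff i| * |x| ^ i := by
    rw [Polynomial.eval_eq_sum_range]
    refine (Finset.abs_sum_le_sum_abs _ _).trans ?_
    apply le_of_eq
    refine Finset.sum_congr rfl fun i _ => ?_
    rw [abs_mul, abs_pow]
  have hE : (0:ℝ) < Real.exp (-(x ^ 2 / 2)) := Real.exp_pos _
  calc |x| ^ k * (|p.eval x| * Real.exp (-(x ^ 2 / 2)))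
      ≤ |x| ^ k * ((∑ i ∈ Finset.range (d + 1), |p.coeff i| * |x| ^ i)
          * Real.exp (-(x ^ 2 / 2))) := by
        apply mul_le_mul_of_nonneg_left ?_ (by positivity)
        exact mul_le_mul_of_nonneg_right heval hE.le
    _ = ∑ i ∈ Finset.range (d + 1),
          |p.coeff i| * (|x| ^ (k + i) * Real.exp (-(x ^ 2 / 2))) := by
        rw [Finset.sum_mul, Finset.mul_sum]
        refine Finset.sum_congr rfl fun i _ => ?_
        rw [pow_add]; ring
    _ ≤ ∑ i ∈ Finset.range (d + 1),
          |p.coeff i| * (1 + 2 ^ (k + i) * (k + i).factorial) := by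
        refine Finset.sum_le_sum fun i _ => ?_
        exact mul_le_mul_of_nonneg_left (pow_mul_exp_le (k + i) x) (abs_nonneg _)

lemma le_top' (m : ℕ) : (m : WithTop ℕ∞) ≤ (∞ : WithTop ℕ∞) := by
  exact_mod_cast le_top

/-- The one-dimensional complex-valued Gaussian as a Schwartz function. -/
def gauss1 : SchwartzMap ℝ ℂ where
  toFun x := (Real.exp (-(x ^ 2 / 2)) : ℂ)
  smooth' := by
    have h : ContDiff ℝ ∞ fun x : ℝ => Real.exp (-(x ^ 2 / 2)) :=
      Real.contDiff_exp.comp (((contDiff_id.pow 2).div_const 2).neg)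
    exact Complex.ofRealCLM.contDiff.comp h
  decay' := by
    intro k m
    obtain ⟨C, hC⟩ := poly_gauss_bound
      ((Polynomial.hermite m).map (algebraMap ℤ ℝ)) k
    refine ⟨C, fun x => ?_⟩
    have hfr : ContDiff ℝ ∞ fun y : ℝ => Real.exp (-(y ^ 2 / 2)) :=
      Real.contDiff_exp.comp (((contDiff_id.pow 2).div_const 2).neg)
    have h1 : ‖iteratedFDeriv ℝ m (fun y : ℝ => ((Real.exp (-(y ^ 2 / 2)) : ℝ) : ℂ)) x‖
        = ‖iteratedFDeriv ℝ m (fun y : ℝ => Real.exp (-(y ^ 2 / 2))) x‖ := by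
      rw [show (fun y : ℝ => ((Real.exp (-(y ^ 2 / 2)) : ℝ) : ℂ))
          = (Complex.ofRealLI ∘ fun y : ℝ => Real.exp (-(y ^ 2 / 2))) from rfl]
      exact Complex.ofRealLI.norm_iteratedFDeriv_comp_left hfr.contDiffAt (le_top' m)
    have h2 : ‖iteratedFDeriv ℝ m (fun y : ℝ => Real.exp (-(y ^ 2 / 2))) x‖
        = |deriv^[m] (fun y : ℝ => Real.exp (-(y ^ 2 / 2))) x| := by
      rw [norm_iteratedFDeriv_eq_norm_iteratedDeriv, iteratedDeriv_eq_iterate,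
        Real.norm_eq_abs]
    rw [h1, h2, Polynomial.deriv_gaussian_eq_hermite_mul_gaussian]
    have h3 : |(-1 : ℝ) ^ m * Polynomial.aeval x (Polynomial.hermite m)
        * Real.exp (-(x ^ 2 / 2))|
        = |Polynomial.aeval x (Polynomial.hermite m)| * Real.exp (-(x ^ 2 / 2)) := by
      rw [abs_mul, abs_mul, abs_pow, abs_neg, abs_one, one_pow, one_mul, Real.abs_exp]
    rw [h3]
    have h4 : Polynomial.aeval x (Polynomial.hermite m)
        = ((Polynomial.hermite m).map (algebraMap ℤ ℝ)).eval x := by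
      rw [Polynomial.aeval_def, Polynomial.eval_map]
    rw [Real.norm_eq_abs, h4]
    exact hC x

variable {E F : Type*} [NormedAddCommGroup E] [NormedSpace ℝ E]
  [NormedAddCommGroup F] [NormedSpace ℝ F]

lemma norm_itfd_fst_le (f : 𝓢(E, ℂ)) (i : ℕ) (p : E × F) :
    ‖iteratedFDeriv ℝ i (fun q : E × F => f q.1) p‖ ≤ ‖iteratedFDeriv ℝ i f p.1‖ := by
  have h := (ContinuousLinearMap.fst ℝ E F).iteratedFDeriv_comp_right
    (f := fun x => f x) (f.smooth ⊤) p (le_top' i)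
  rw [show (fun q : E × F => f q.1) = (fun x => f x) ∘ (ContinuousLinearMap.fst ℝ E F)
    from rfl, h]
  refine (ContinuousMultilinearMap.norm_compContinuousLinearMap_le _ _).trans ?_
  have : ∏ _j : Fin i, ‖ContinuousLinearMap.fst ℝ E F‖ ≤ 1 :=
    Finset.prod_le_one (fun _ _ => norm_nonneg _)
      (fun _ _ => ContinuousLinearMap.norm_fst_le ℝ E F)
  calc ‖iteratedFDeriv ℝ i (fun x => f x) p.1‖ * ∏ _j : Fin i, ‖ContinuousLinearMap.fst ℝ E F‖
      ≤ ‖iteratedFDeriv ℝ i (fun x => f x) p.1‖ * 1 :=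
        mul_le_mul_of_nonneg_left this (norm_nonneg _)
    _ = ‖iteratedFDeriv ℝ i (fun x => f x) p.1‖ := mul_one _

lemma norm_itfd_snd_le (g : 𝓢(F, ℂ)) (i : ℕ) (p : E × F) :
    ‖iteratedFDeriv ℝ i (fun q : E × F => g q.2) p‖ ≤ ‖iteratedFDeriv ℝ i g p.2‖ := by
  have h := (ContinuousLinearMap.snd ℝ E F).iteratedFDeriv_comp_right
    (f := fun x => g x) (g.smooth ⊤) p (le_top' i)
  rw [show (fun q : E × F => g q.2) = (fun x => g x) ∘ (ContinuousLinearMap.snd ℝ E F)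
    from rfl, h]
  refine (ContinuousMultilinearMap.norm_compContinuousLinearMap_le _ _).trans ?_
  have : ∏ _j : Fin i, ‖ContinuousLinearMap.snd ℝ E F‖ ≤ 1 :=
    Finset.prod_le_one (fun _ _ => norm_nonneg _)
      (fun _ _ => ContinuousLinearMap.norm_snd_le ℝ E F)
  calc ‖iteratedFDeriv ℝ i (fun x => g x) p.2‖ * ∏ _j : Fin i, ‖ContinuousLinearMap.snd ℝ E F‖
      ≤ ‖iteratedFDeriv ℝ i (fun x => g x) p.2‖ * 1 :=
        mul_le_mul_of_nonneg_left this (norm_nonneg _)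
    _ = ‖iteratedFDeriv ℝ i (fun x => g x) p.2‖ := mul_one _

/-- Tensor product of Schwartz functions. -/
def tensor (f : 𝓢(E, ℂ)) (g : 𝓢(F, ℂ)) : 𝓢(E × F, ℂ) where
  toFun p := f p.1 * g p.2
  smooth' := ((f.smooth ⊤).comp contDiff_fst).mul ((g.smooth ⊤).comp contDiff_snd)
  decay' := by
    intro k m
    refine ⟨∑ l ∈ Finset.range (k + 1), ∑ i ∈ Finset.range (m + 1),
      ((k.choose l : ℝ) * (m.choose i : ℝ)) *
        (SchwartzMap.seminorm ℝ l i f * SchwartzMap.seminorm ℝ (k - l) (m - i) g), ?_⟩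
    intro p
    have hfc : ContDiff ℝ ∞ fun q : E × F => f q.1 := (f.smooth ⊤).comp contDiff_fst
    have hgc : ContDiff ℝ ∞ fun q : E × F => g q.2 := (g.smooth ⊤).comp contDiff_snd
    have h1 : ‖iteratedFDeriv ℝ m (fun q : E × F => f q.1 * g q.2) p‖ ≤
        ∑ i ∈ Finset.range (m + 1), (m.choose i : ℝ) * ‖iteratedFDeriv ℝ i f p.1‖ *
          ‖iteratedFDeriv ℝ (m - i) g p.2‖ := by
      refine (norm_iteratedFDeriv_mul_le hfc hgc p (le_top' m)).trans ?_
      refine Finset.sum_le_sum fun i _ => ?_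
      have e1 := norm_itfd_fst_le (F := F) f i p
      have e2 := norm_itfd_snd_le (E := E) g (m - i) p
      have := mul_le_mul (mul_le_mul_of_nonneg_left e1 (by positivity : (0:ℝ) ≤ (m.choose i : ℝ)))
        e2 (norm_nonneg _) (by positivity)
      exact this
    have h2 : ‖p‖ ^ k ≤ ∑ l ∈ Finset.range (k + 1),
        (k.choose l : ℝ) * (‖p.1‖ ^ l * ‖p.2‖ ^ (k - l)) := by
      have hp : ‖p‖ ≤ ‖p.1‖ + ‖p.2‖ := by
        rw [Prod.norm_def]
        exact max_le (by linarith [norm_nonneg p.2]) (by linarith [norm_nonneg p.1])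
      calc ‖p‖ ^ k ≤ (‖p.1‖ + ‖p.2‖) ^ k := pow_le_pow_left₀ (norm_nonneg _) hp k
        _ = ∑ l ∈ Finset.range (k + 1), (k.choose l : ℝ) * (‖p.1‖ ^ l * ‖p.2‖ ^ (k - l)) := by
          rw [add_pow]
          refine Finset.sum_congr rfl fun l _ => ?_
          ring
    calc ‖p‖ ^ k * ‖iteratedFDeriv ℝ m (fun q : E × F => f q.1 * g q.2) p‖
        ≤ (∑ l ∈ Finset.range (k + 1), (k.choose l : ℝ) * (‖p.1‖ ^ l * ‖p.2‖ ^ (k - l))) *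
          (∑ i ∈ Finset.range (m + 1), (m.choose i : ℝ) * ‖iteratedFDeriv ℝ i f p.1‖ *
            ‖iteratedFDeriv ℝ (m - i) g p.2‖) := by
          refine mul_le_mul h2 h1 (norm_nonneg _) ?_
          exact Finset.sum_nonneg fun l _ => by positivity
      _ ≤ ∑ l ∈ Finset.range (k + 1), ∑ i ∈ Finset.range (m + 1),
          ((k.choose l : ℝ) * (m.choose i : ℝ)) *
            (SchwartzMap.seminorm ℝ l i f * SchwartzMap.seminorm ℝ (k - l) (m - i) g) := by
          rw [Finset.sum_mul_sum]
          refine Finset.sum_le_sum fun l _ => Finset.sum_le_sum fun i _ => ?_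
          have e1 : ‖p.1‖ ^ l * ‖iteratedFDeriv ℝ i f p.1‖ ≤ SchwartzMap.seminorm ℝ l i f :=
            f.le_seminorm ℝ l i p.1
          have e2 : ‖p.2‖ ^ (k - l) * ‖iteratedFDeriv ℝ (m - i) g p.2‖ ≤
              SchwartzMap.seminorm ℝ (k - l) (m - i) g :=
            g.le_seminorm ℝ (k - l) (m - i) p.2
          have hnn1 : (0:ℝ) ≤ ‖p.1‖ ^ l * ‖iteratedFDeriv ℝ i f p.1‖ := by positivity
          have hnn2 : (0:ℝ) ≤ ‖p.2‖ ^ (k - l) * ‖iteratedFDeriv ℝ (m - i) g p.2‖ := by positivity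
          calc (k.choose l : ℝ) * (‖p.1‖ ^ l * ‖p.2‖ ^ (k - l)) *
              ((m.choose i : ℝ) * ‖iteratedFDeriv ℝ i f p.1‖ *
                ‖iteratedFDeriv ℝ (m - i) g p.2‖)
              = ((k.choose l : ℝ) * (m.choose i : ℝ)) *
                ((‖p.1‖ ^ l * ‖iteratedFDeriv ℝ i f p.1‖) *
                  (‖p.2‖ ^ (k - l) * ‖iteratedFDeriv ℝ (m - i) g p.2‖)) := by ring
            _ ≤ ((k.choose l : ℝ) * (m.choose i : ℝ)) *
                (SchwartzMap.seminorm ℝ l i f * SchwartzMap.seminorm ℝ (k - l) (m - i) g) := by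
                apply mul_le_mul_of_nonneg_left ?_ (by positivity)
                exact mul_le_mul e1 e2 hnn2 (apply_nonneg _ _)

@[simp] lemma tensor_apply (f : 𝓢(E, ℂ)) (g : 𝓢(F, ℂ)) (p : E × F) :
    tensor f g p = f p.1 * g p.2 := rfl

/-- Finite products of a Schwartz function over coordinates form a Schwartz function. -/
lemma pi_prod_schwartz {V : Type*} [NormedAddCommGroup V] [NormedSpace ℝ V]
    [FiniteDimensional ℝ V] (g : 𝓢(V, ℂ)) (m : ℕ) :
    ∃ G : 𝓢((Fin m → V), ℂ), ∀ y, G y = ∏ i, g (y i) := by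
  induction m with
  | zero =>
    have hdec : ∀ k n : ℕ, ∃ C : ℝ, ∀ x : Fin 0 → V,
        ‖x‖ ^ k * ‖iteratedFDeriv ℝ n (fun _ : Fin 0 → V => (1 : ℂ)) x‖ ≤ C := by
      intro k n
      refine ⟨1, fun x => ?_⟩
      have hx0 : ‖x‖ = 0 := by
        have hx : x = 0 := Subsingleton.elim x 0
        rw [hx, norm_zero]
      rcases n with _ | n
      · rcases k with _ | k
        · simp [norm_iteratedFDeriv_zero]
        · rw [hx0]; simp
      · rw [iteratedFDeriv_const_of_ne (Nat.succ_ne_zero n)]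
        simp
    refine ⟨⟨fun _ => (1 : ℂ), contDiff_const, hdec⟩, fun y => ?_⟩
    show (1 : ℂ) = ∏ i, g (y i)
    simp
  | succ m IH =>
    obtain ⟨G, hG⟩ := IH
    let eL : (Fin (m + 1) → V) ≃ₗ[ℝ] V × (Fin m → V) :=
      { (Fin.consEquiv fun _ : Fin (m + 1) => V).symm with
        map_add' := fun a b => rfl
        map_smul' := fun c a => rfl }
    let e : (Fin (m + 1) → V) ≃L[ℝ] V × (Fin m → V) := eL.toContinuousLinearEquiv
    refine ⟨SchwartzMap.compCLMOfContinuousLinearEquiv ℝ e (tensor g G), fun y => ?_⟩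
    have happ : (SchwartzMap.compCLMOfContinuousLinearEquiv ℝ e (tensor g G)) y
        = g (y 0) * G (Fin.tail y) := rfl
    rw [happ, hG, Fin.prod_univ_succ]
    rfl

end GCK

end GCKaux

theorem gaussian_cutoff_kernel_is_schwartz (n : ℕ) (hn : 1 ≤ n)
    (lam : SchwartzMap (Fin 4 → ℝ) ℂ) :
    ∃ g : SchwartzMap (Fin n → Fin 4 → ℝ) ℂ, ∀ a : Fin n → Fin 4 → ℝ,
      g a = lam ((n : ℝ)⁻¹ • ∑ j, a j) *
        (Real.exp (-(1/2) * ∑ j, ∑ μ : Fin 4,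
          (a j μ - ((n : ℝ)⁻¹ • ∑ l, a l) μ) ^ 2) : ℂ) := by
  classical
  -- Gaussian on `Fin 4 → ℝ`
  obtain ⟨G4, hG4⟩ := GCK.pi_prod_schwartz GCK.gauss1 4
  -- Gaussian on `Fin n → Fin 4 → ℝ`
  obtain ⟨Gn, hGn⟩ := GCK.pi_prod_schwartz G4 n
  -- the mean map κ
  set κ : (Fin n → Fin 4 → ℝ) →L[ℝ] (Fin 4 → ℝ) :=
    (n : ℝ)⁻¹ • (∑ j : Fin n, ContinuousLinearMap.proj j) with hκ
  have hκval : ∀ a : Fin n → Fin 4 → ℝ, κ a = (n : ℝ)⁻¹ • ∑ j, a j := by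
    intro a
    simp [hκ, ContinuousLinearMap.sum_apply]
  -- the linear change of variables
  set L : (Fin n → Fin 4 → ℝ) →L[ℝ] (Fin 4 → ℝ) × (Fin n → Fin 4 → ℝ) :=
    κ.prod (ContinuousLinearMap.pi fun j => ContinuousLinearMap.proj j - κ) with hL
  have hL1 : ∀ a, (L a).1 = κ a := fun a => rfl
  have hL2 : ∀ a j, (L a).2 j = a j - κ a := fun a j => rfl
  have hanti : AntilipschitzWith 2 L := by
    refine AntilipschitzWith.of_le_mul_dist fun a b => ?_
    rw [dist_eq_norm, dist_eq_norm, ← map_sub]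
    set c := a - b
    rw [show ((2 : ℝ≥0) : ℝ) * ‖L c‖ = 2 * ‖L c‖ by norm_num]
    refine (pi_norm_le_iff_of_nonneg (by positivity)).2 fun j => ?_
    have hc : c j = (L c).2 j + (L c).1 := by
      rw [hL2, hL1]; abel
    calc ‖c j‖ = ‖(L c).2 j + (L c).1‖ := by rw [← hc]
      _ ≤ ‖(L c).2 j‖ + ‖(L c).1‖ := norm_add_le _ _
      _ ≤ ‖(L c).2‖ + ‖(L c).1‖ := by
          gcongr
          exact norm_le_pi_norm _ j
      _ ≤ ‖L c‖ + ‖L c‖ := by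
          gcongr
          · exact norm_snd_le _
          · exact norm_fst_le _
      _ = 2 * ‖L c‖ := by ring
  refine ⟨SchwartzMap.compCLMOfAntilipschitz ℝ L.hasTemperateGrowth hanti
    (GCK.tensor lam Gn), fun a => ?_⟩
  rw [SchwartzMap.compCLMOfAntilipschitz_apply]
  have : (GCK.tensor lam Gn) (L a) = lam ((L a).1) * Gn ((L a).2) := rfl
  rw [Function.comp_apply, this, hL1, hκval]
  congr 1
  -- now identify the Gaussian factor
  rw [hGn]
  have hval : ∀ j, G4 ((L a).2 j) = ∏ μ : Fin 4,
      (Real.exp (-(((a j - κ a) μ) ^ 2 / 2)) : ℂ) := by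
    intro j
    rw [hL2, hG4]
    rfl
  calc (∏ j, G4 ((L a).2 j))
      = ∏ j, ∏ μ : Fin 4, (Real.exp (-(((a j - κ a) μ) ^ 2 / 2)) : ℂ) := by
        exact Finset.prod_congr rfl fun j _ => hval j
    _ = ((∏ j, ∏ μ : Fin 4, Real.exp (-(((a j - κ a) μ) ^ 2 / 2)) : ℝ) : ℂ) := by
        push_cast
        rfl
    _ = (Real.exp (-(1/2) * ∑ j, ∑ μ : Fin 4,
          (a j μ - ((n : ℝ)⁻¹ • ∑ l, a l) μ) ^ 2) : ℂ) := by
        norm_cast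
        have harg : -(1/2 : ℝ) * ∑ j, ∑ μ : Fin 4,
            (a j μ - ((n : ℝ)⁻¹ • ∑ l, a l) μ) ^ 2
            = ∑ j, ∑ μ : Fin 4, -(((a j - κ a) μ) ^ 2 / 2) := by
          rw [Finset.mul_sum]
          refine Finset.sum_congr rfl fun j _ => ?_
          rw [Finset.mul_sum]
          refine Finset.sum_congr rfl fun μ _ => ?_
          have hpt : (a j - κ a) μ = a j μ - ((n : ℝ)⁻¹ • ∑ l, a l) μ := by
            rw [Pi.sub_apply, hκval]
          rw [hpt]
          ring
        rw [harg, Real.exp_sum]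
        refine (Finset.prod_congr rfl fun j _ => ?_).symm
        rw [Real.exp_sum]
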